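/- For every rooted tree G, the tree searching strategy s_G guarantees an expected payoff of at least V_G against every Hider pure strategy: for every vertex v of G, the expected payoff E_{σ∼s_G}[P(v,σ)] ≥ V_G. -/

import Mathlib

/-- A rooted tree with vertex probabilities: a single vertex, a root with one branch,
or a root with two branches. -/
inductive RTree : Type
  | leaf (p : ℝ) : RTree
  | node1 (p : ℝ) (G' : RTree) : RTree
  | node2 (p : ℝ) (G₁ G₂ : RTree) : RTree

namespace RTree

/-- Validity of the probabilities: every leaf has probability in `(0,1)`, and every
internal vertex (including the root) has probability in `(0,1]`. -/
def valid : RTree → Prop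
  | leaf p => 0 < p ∧ p < 1
  | node1 p G' => (0 < p ∧ p ≤ 1) ∧ valid G'
  | node2 p G₁ G₂ => (0 < p ∧ p ≤ 1) ∧ valid G₁ ∧ valid G₂

/-- `π(G)`, the product of the probabilities of all vertices of `G`. -/
def piT : RTree → ℝ
  | leaf p => p
  | node1 p G' => p * piT G'
  | node2 p G₁ G₂ => p * (piT G₁ * piT G₂)

/-- The recursively defined value `V_G` of the game on `G`. -/
noncomputable def valT : RTree → ℝ
  | leaf p => p
  | node1 p G' => p * valT G'
  | node2 p G₁ G₂ =>
      p * (((1 - piT G₁) / valT G₁ + (1 - piT G₂) / valT G₂)⁻¹) * (1 - piT G₁ * piT G₂)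

/-- The normalizing factor `λ` for a branch vertex with branches `G₁` and `G₂`. -/
noncomputable def lamT (G₁ G₂ : RTree) : ℝ :=
  ((1 - piT G₁) / valT G₁ + (1 - piT G₂) / valT G₂)⁻¹


/-- Vertices of a rooted tree, as addresses: the root is `[]`, and the address of a
vertex in a branch is the branch direction (`false` for the first/unique branch,
`true` for the second) followed by its address within the branch. -/
def verts : RTree → List (List Bool)
  | leaf _ => [[]]
  | node1 _ G' => [] :: (verts G').map (List.cons false)
  | node2 _ G₁ G₂ => [] :: ((verts G₁).map (List.cons false) ++ (verts G₂).map (List.cons true))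

/-- The success probability of the vertex at a given address. -/
def pAt : RTree → List Bool → ℝ
  | leaf p, _ => p
  | node1 p _, [] => p
  | node1 _ G', _ :: l => pAt G' l
  | node2 p _ _, [] => p
  | node2 _ G₁ _, false :: l => pAt G₁ l
  | node2 _ _ G₂, true :: l => pAt G₂ l

/-- The subtree `G(v)` rooted at the vertex with address `v` (if it exists). -/
def sub? : RTree → List Bool → Option RTree
  | t, [] => some t
  | leaf _, _ :: _ => none
  | node1 _ G', false :: l => sub? G' l
  | node1 _ _, true :: _ => none
  | node2 _ G₁ _, false :: l => sub? G₁ l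
  | node2 _ _ G₂, true :: l => sub? G₂ l

/-- The tree hiding strategy `h_G`, as a function assigning probabilities to addresses. -/
noncomputable def hide : RTree → List Bool → ℝ
  | leaf _, [] => 1
  | leaf _, _ :: _ => 0
  | node1 _ _, [] => 0
  | node1 _ G', false :: l => hide G' l
  | node1 _ _, true :: _ => 0
  | node2 _ _ _, [] => 0
  | node2 _ G₁ G₂, false :: l => lamT G₁ G₂ * ((1 - piT G₁) / valT G₁) * hide G₁ l
  | node2 _ G₁ G₂, true :: l => lamT G₁ G₂ * ((1 - piT G₂) / valT G₂) * hide G₂ l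

/-- An expanding search of `G`: an ordering of all of the vertices of `G` in which every
vertex other than the root appears after its parent (hence the root `[]` comes first). -/
def IsSearch (G : RTree) (σ : List (List Bool)) : Prop :=
  σ.Perm (verts G) ∧ ∀ a ∈ σ, a ≠ [] → σ.idxOf a.dropLast < σ.idxOf a

/-- A depth-first expanding search: for every vertex `v`, the vertices of the subtree
`G(v)` occupy consecutive positions beginning with `v`;  equivalently, any vertex `w`
appearing between `v` and a descendant of `v` is itself a descendant of `v`. -/
def IsDFS (G : RTree) (σ : List (List Bool)) : Prop :=
  IsSearch G σ ∧ ∀ v a w, v ∈ σ → a ∈ σ → w ∈ σ → v <+: a →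
    σ.idxOf v ≤ σ.idxOf w → σ.idxOf w ≤ σ.idxOf a → v <+: w

/-- `P(v,σ)`: the probability of reaching and successfully searching vertex `v`,
i.e. the product of `p` over the locations searched up to and including `v`. -/
def capProb (G : RTree) (σ : List (List Bool)) (v : List Bool) : ℝ :=
  ((σ.take (σ.idxOf v + 1)).map (pAt G)).prod

/-- `P(x,σ) = Σ_v x(v) P(v,σ)` for a distribution `x` on the vertices. -/
def payoffD (G : RTree) (x : List Bool → ℝ) (σ : List (List Bool)) : ℝ :=
  (σ.map (fun v => x v * capProb G σ v)).sum

end RTree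

namespace RTree

/-- The tree searching strategy `s_G`, given as a finite list of (depth-first expanding
search, probability) pairs: at each branch vertex with branches `G₁` and `G₂`, the
branch `G₁` is searched first with probability `λ(1/V_{G₁} − π(G₂)/V_{G₂})`, and
otherwise `G₂` is searched first, independently at each branch vertex. -/
noncomputable def sG : RTree → List (List (List Bool) × ℝ)
  | leaf _ => [([([] : List Bool)], 1)]
  | node1 _ G' =>
      (sG G').map (fun sq => (([] : List Bool) :: sq.1.map (List.cons false), sq.2))
  | node2 _ G₁ G₂ =>
      let r₁ := sG G₁
      let r₂ := sG G₂
      let q₁ := lamT G₁ G₂ * (1 / valT G₁ - piT G₂ / valT G₂)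
      let q₂ := lamT G₁ G₂ * (1 / valT G₂ - piT G₁ / valT G₁)
      r₁.flatMap (fun s₁ =>
        r₂.flatMap (fun s₂ =>
          [(([] : List Bool) :: (s₁.1.map (List.cons false) ++ s₂.1.map (List.cons true)),
              q₁ * s₁.2 * s₂.2),
           (([] : List Bool) :: (s₂.1.map (List.cons true) ++ s₁.1.map (List.cons false)),
              q₂ * s₁.2 * s₂.2)]))

/-- The expected payoff of the tree searching strategy `s_G` against a Hider hiding at
vertex `v`. -/
noncomputable def sGPay (G : RTree) (v : List Bool) : ℝ :=
  ((sG G).map (fun sq => sq.2 * capProb G sq.1 v)).sum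

end RTree


namespace RTree

lemma piT_pos : ∀ G : RTree, valid G → 0 < piT G := by
  intro G
  induction G with
  | leaf p => exact fun h => h.1
  | node1 p G' ih => exact fun h => mul_pos h.1.1 (ih h.2)
  | node2 p G₁ G₂ ih₁ ih₂ =>
      exact fun h => mul_pos h.1.1 (mul_pos (ih₁ h.2.1) (ih₂ h.2.2))

lemma piT_lt_one : ∀ G : RTree, valid G → piT G < 1 := by
  intro G
  induction G with
  | leaf p => exact fun h => h.2
  | node1 p G' ih =>
      intro h
      have h1 := ih h.2
      have h2 := piT_pos G' h.2
      simp only [piT]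
      nlinarith [h.1.1, h.1.2]
  | node2 p G₁ G₂ ih₁ ih₂ =>
      intro h
      have h1 := ih₁ h.2.1
      have h2 := ih₂ h.2.2
      have p1 := piT_pos G₁ h.2.1
      have p2 := piT_pos G₂ h.2.2
      have : piT G₁ * piT G₂ < 1 := by nlinarith
      simp only [piT]
      nlinarith [h.1.1, h.1.2]

lemma denom_pos {G₁ G₂ : RTree} (h₁ : valid G₁) (h₂ : valid G₂)
    (v₁ : 0 < valT G₁) (v₂ : 0 < valT G₂) :
    0 < (1 - piT G₁) / valT G₁ + (1 - piT G₂) / valT G₂ := by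
  have hπ₁ := piT_lt_one G₁ h₁
  have hπ₂ := piT_lt_one G₂ h₂
  exact add_pos (div_pos (by linarith) v₁) (div_pos (by linarith) v₂)

lemma valT_pos : ∀ G : RTree, valid G → 0 < valT G := by
  intro G
  induction G with
  | leaf p => exact fun h => h.1
  | node1 p G' ih => exact fun h => mul_pos h.1.1 (ih h.2)
  | node2 p G₁ G₂ ih₁ ih₂ =>
      intro h
      have v₁ := ih₁ h.2.1
      have v₂ := ih₂ h.2.2
      have hd := denom_pos h.2.1 h.2.2 v₁ v₂
      have hπ : piT G₁ * piT G₂ < 1 := by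
        nlinarith [piT_pos G₁ h.2.1, piT_pos G₂ h.2.2, piT_lt_one G₁ h.2.1, piT_lt_one G₂ h.2.2]
      have hinv : (0:ℝ) < ((1 - piT G₁) / valT G₁ + (1 - piT G₂) / valT G₂)⁻¹ :=
        inv_pos.mpr hd
      simp only [valT]
      exact mul_pos (mul_pos h.1.1 hinv) (by linarith)

lemma lamT_pos {G₁ G₂ : RTree} (h₁ : valid G₁) (h₂ : valid G₂) : 0 < lamT G₁ G₂ := by
  exact inv_pos.mpr (denom_pos h₁ h₂ (valT_pos G₁ h₁) (valT_pos G₂ h₂))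

lemma lam_core {G₁ G₂ : RTree} (h₁ : valid G₁) (h₂ : valid G₂)
    (hv₁ : valT G₁ ≤ 1) (hv₂ : valT G₂ ≤ 1) :
    lamT G₁ G₂ * (1 - piT G₁ * piT G₂) ≤ 1 := by
  have v₁ := valT_pos G₁ h₁
  have v₂ := valT_pos G₂ h₂
  have π₁ := piT_pos G₁ h₁
  have π₂ := piT_pos G₂ h₂
  have π₁' := piT_lt_one G₁ h₁
  have π₂' := piT_lt_one G₂ h₂
  have hd := denom_pos h₁ h₂ v₁ v₂
  have hA : 1 - piT G₁ ≤ (1 - piT G₁) / valT G₁ := by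
    rw [le_div_iff₀ v₁]; nlinarith
  have hB : 1 - piT G₂ ≤ (1 - piT G₂) / valT G₂ := by
    rw [le_div_iff₀ v₂]; nlinarith
  rw [lamT, inv_mul_le_iff₀ hd]
  nlinarith

lemma valT_le_one : ∀ G : RTree, valid G → valT G ≤ 1 := by
  intro G
  induction G with
  | leaf p => exact fun h => le_of_lt h.2
  | node1 p G' ih =>
      intro h
      have h1 := ih h.2
      have h2 := valT_pos G' h.2
      simp only [valT]
      nlinarith [h.1.1, h.1.2]
  | node2 p G₁ G₂ ih₁ ih₂ =>
      intro h
      have hc := lam_core h.2.1 h.2.2 (ih₁ h.2.1) (ih₂ h.2.2)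
      have hl := lamT_pos h.2.1 h.2.2
      have hπ : piT G₁ * piT G₂ < 1 := by
        nlinarith [piT_pos G₁ h.2.1, piT_pos G₂ h.2.2, piT_lt_one G₁ h.2.1, piT_lt_one G₂ h.2.2]
      have hval : valT (node2 p G₁ G₂) = p * (lamT G₁ G₂ * (1 - piT G₁ * piT G₂)) := by
        simp only [valT, lamT]; ring
      rw [hval]
      nlinarith [h.1.1, h.1.2]

lemma sum_lam {G₁ G₂ : RTree} (h₁ : valid G₁) (h₂ : valid G₂) :
    lamT G₁ G₂ * ((1 - piT G₁) / valT G₁ + (1 - piT G₂) / valT G₂) = 1 :=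
  inv_mul_cancel₀ (ne_of_gt (denom_pos h₁ h₂ (valT_pos G₁ h₁) (valT_pos G₂ h₂)))

lemma prod_pAt_verts : ∀ G : RTree, ((verts G).map (pAt G)).prod = piT G := by
  intro G
  induction G with
  | leaf p => simp [verts, pAt, piT]
  | node1 p G' ih =>
      simp only [verts, piT, List.map_cons, List.map_map, List.prod_cons]
      have e : (verts G').map (pAt (node1 p G') ∘ List.cons false) = (verts G').map (pAt G') := rfl
      rw [e, ih]
      simp [pAt]
  | node2 p G₁ G₂ ih₁ ih₂ =>
      simp only [verts, piT, List.map_cons, List.map_append, List.map_map, List.prod_cons,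
        List.prod_append]
      have e₁ : (verts G₁).map (pAt (node2 p G₁ G₂) ∘ List.cons false) = (verts G₁).map (pAt G₁) := rfl
      have e₂ : (verts G₂).map (pAt (node2 p G₁ G₂) ∘ List.cons true) = (verts G₂).map (pAt G₂) := rfl
      rw [e₁, e₂, ih₁, ih₂]
      simp [pAt]

lemma prod_pAt_perm {G H : RTree} {s : List (List Bool)} (hs : s.Perm (verts H))
    (hHG : ∀ l, pAt G l = pAt H l) : (s.map (pAt G)).prod = piT H := by
  have h1 : s.map (pAt G) = s.map (pAt H) := List.map_congr_left (fun a _ => hHG a)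
  rw [h1, (hs.map (pAt H)).prod_eq, prod_pAt_verts]

lemma sG_perm : ∀ G : RTree, ∀ sq ∈ sG G, sq.1.Perm (verts G) := by
  intro G
  induction G with
  | leaf p => intro sq hsq; simp [sG] at hsq; simp [hsq, verts]
  | node1 p G' ih =>
      intro sq hsq
      simp only [sG, List.mem_map] at hsq
      obtain ⟨a, ha, rfl⟩ := hsq
      simpa [verts] using ((ih a ha).map (List.cons false)).cons []
  | node2 p G₁ G₂ ih₁ ih₂ =>
      intro sq hsq
      have hsq' : sq ∈ (sG G₁).flatMap (fun s₁ => (sG G₂).flatMap (fun s₂ =>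
          [(([] : List Bool) :: (s₁.1.map (List.cons false) ++ s₂.1.map (List.cons true)),
              lamT G₁ G₂ * (1 / valT G₁ - piT G₂ / valT G₂) * s₁.2 * s₂.2),
           (([] : List Bool) :: (s₂.1.map (List.cons true) ++ s₁.1.map (List.cons false)),
              lamT G₁ G₂ * (1 / valT G₂ - piT G₁ / valT G₁) * s₁.2 * s₂.2)])) := hsq
      simp only [List.mem_flatMap] at hsq'
      obtain ⟨s₁, hs₁, s₂, hs₂, hmem⟩ := hsq'
      have p₁ := (ih₁ s₁ hs₁).map (List.cons false)
      have p₂ := (ih₂ s₂ hs₂).map (List.cons true)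
      simp only [List.mem_cons, List.mem_singleton] at hmem
      rcases hmem with rfl | rfl | h
      · exact (p₁.append p₂).cons []
      · exact ((List.perm_append_comm).cons []).trans ((p₁.append p₂).cons [])
      · exact absurd h (List.not_mem_nil)

lemma sum_map_flatMap {α β : Type*} (l : List α) (f : α → List β) (g : β → ℝ) :
    ((l.flatMap f).map g).sum = (l.map fun a => ((f a).map g).sum).sum := by
  induction l with
  | nil => simp
  | cons a t ih => simp [ih]

lemma sG_weight : ∀ G : RTree, valid G → ((sG G).map Prod.snd).sum = 1 := by
  intro G
  induction G with
  | leaf p => intro _; simp [sG]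
  | node1 p G' ih =>
      intro h
      simp only [sG, List.map_map]
      exact ih h.2
  | node2 p G₁ G₂ ih₁ ih₂ =>
      intro h
      have hsG : sG (node2 p G₁ G₂) = (sG G₁).flatMap (fun s₁ => (sG G₂).flatMap (fun s₂ =>
          [(([] : List Bool) :: (s₁.1.map (List.cons false) ++ s₂.1.map (List.cons true)),
              lamT G₁ G₂ * (1 / valT G₁ - piT G₂ / valT G₂) * s₁.2 * s₂.2),
           (([] : List Bool) :: (s₂.1.map (List.cons true) ++ s₁.1.map (List.cons false)),
              lamT G₁ G₂ * (1 / valT G₂ - piT G₁ / valT G₁) * s₁.2 * s₂.2)])) := rfl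
      have hq : lamT G₁ G₂ * (1 / valT G₁ - piT G₂ / valT G₂)
          + lamT G₁ G₂ * (1 / valT G₂ - piT G₁ / valT G₁) = 1 := by
        have v₁ := (valT_pos G₁ h.2.1).ne'
        have v₂ := (valT_pos G₂ h.2.2).ne'
        have key : (1 / valT G₁ - piT G₂ / valT G₂) + (1 / valT G₂ - piT G₁ / valT G₁)
            = (1 - piT G₁) / valT G₁ + (1 - piT G₂) / valT G₂ := by
          field_simp
          ring
        calc lamT G₁ G₂ * (1 / valT G₁ - piT G₂ / valT G₂)
              + lamT G₁ G₂ * (1 / valT G₂ - piT G₁ / valT G₁)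
            = lamT G₁ G₂ * ((1 - piT G₁) / valT G₁ + (1 - piT G₂) / valT G₂) := by
              rw [← key]; ring
          _ = 1 := sum_lam h.2.1 h.2.2
      rw [hsG, sum_map_flatMap]
      have inner : ∀ s₁ ∈ sG G₁,
          ((((sG G₂).flatMap (fun s₂ =>
          [(([] : List Bool) :: (s₁.1.map (List.cons false) ++ s₂.1.map (List.cons true)),
              lamT G₁ G₂ * (1 / valT G₁ - piT G₂ / valT G₂) * s₁.2 * s₂.2),
           (([] : List Bool) :: (s₂.1.map (List.cons true) ++ s₁.1.map (List.cons false)),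
              lamT G₁ G₂ * (1 / valT G₂ - piT G₁ / valT G₁) * s₁.2 * s₂.2)])).map Prod.snd).sum)
          = s₁.2 := by
        intro s₁ _
        rw [sum_map_flatMap]
        have : ∀ s₂ ∈ sG G₂, (([( (([] : List Bool) :: (s₁.1.map (List.cons false) ++ s₂.1.map (List.cons true))),
              lamT G₁ G₂ * (1 / valT G₁ - piT G₂ / valT G₂) * s₁.2 * s₂.2),
           (([] : List Bool) :: (s₂.1.map (List.cons true) ++ s₁.1.map (List.cons false)),
              lamT G₁ G₂ * (1 / valT G₂ - piT G₁ / valT G₁) * s₁.2 * s₂.2)].map Prod.snd).sum)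
            = Prod.snd s₂ * s₁.2 := by
          intro s₂ _
          simp only [List.map_cons, List.map_nil, List.sum_cons, List.sum_nil]
          linear_combination (s₁.2 * s₂.2) * hq
        rw [List.map_congr_left this, List.sum_map_mul_right, ih₂ h.2.2, one_mul]
      rw [List.map_congr_left inner, ih₁ h.2.1]

lemma sG_head : ∀ G : RTree, ∀ sq ∈ sG G, ∃ rest, sq.1 = ([] : List Bool) :: rest := by
  intro G
  induction G with
  | leaf p => intro sq hsq; simp [sG] at hsq; exact ⟨[], by simp [hsq]⟩
  | node1 p G' ih =>
      intro sq hsq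
      simp only [sG, List.mem_map] at hsq
      obtain ⟨a, _, rfl⟩ := hsq
      exact ⟨_, rfl⟩
  | node2 p G₁ G₂ ih₁ ih₂ =>
      intro sq hsq
      have hsq' : sq ∈ (sG G₁).flatMap (fun s₁ => (sG G₂).flatMap (fun s₂ =>
          [(([] : List Bool) :: (s₁.1.map (List.cons false) ++ s₂.1.map (List.cons true)),
              lamT G₁ G₂ * (1 / valT G₁ - piT G₂ / valT G₂) * s₁.2 * s₂.2),
           (([] : List Bool) :: (s₂.1.map (List.cons true) ++ s₁.1.map (List.cons false)),
              lamT G₁ G₂ * (1 / valT G₂ - piT G₁ / valT G₁) * s₁.2 * s₂.2)])) := hsq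
      simp only [List.mem_flatMap, List.mem_cons, List.mem_singleton] at hsq'
      obtain ⟨s₁, _, s₂, _, hmem⟩ := hsq'
      rcases hmem with rfl | rfl | h
      · exact ⟨_, rfl⟩
      · exact ⟨_, rfl⟩
      · exact absurd h (List.not_mem_nil)

lemma idx_cons_self (a : List Bool) (t : List (List Bool)) : ((a :: t).idxOf a) = 0 := by
  simp [List.idxOf_cons]

lemma idx_cons_ne {a b : List Bool} (t : List (List Bool)) (h : b ≠ a) :
    (b :: t).idxOf a = t.idxOf a + 1 := by
  simp [List.idxOf_cons, beq_false_of_ne h]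

lemma idx_append_left {v : List Bool} {A : List (List Bool)} (B : List (List Bool))
    (h : v ∈ A) : (A ++ B).idxOf v = A.idxOf v := by
  induction A with
  | nil => simp at h
  | cons a t ih =>
      by_cases hav : a = v
      · subst hav
        simp [idx_cons_self]
      · have h' : v ∈ t := by
          rcases List.mem_cons.mp h with h | h
          · exact absurd h.symm hav
          · exact h
        rw [List.cons_append, idx_cons_ne _ hav, idx_cons_ne _ hav, ih h']

lemma idx_append_right {v : List Bool} {A : List (List Bool)} (B : List (List Bool))
    (h : v ∉ A) : (A ++ B).idxOf v = A.length + B.idxOf v := by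
  induction A with
  | nil => simp
  | cons a t ih =>
      have hav : a ≠ v := fun e => h (e ▸ List.mem_cons_self)
      have h' : v ∉ t := fun e => h (List.mem_cons_of_mem a e)
      rw [List.cons_append, idx_cons_ne _ hav, ih h', List.length_cons]
      omega

lemma idx_lt_length {v : List Bool} {A : List (List Bool)} (h : v ∈ A) :
    A.idxOf v < A.length := by
  induction A with
  | nil => simp at h
  | cons a t ih =>
      by_cases hav : a = v
      · subst hav
        simp [idx_cons_self]
      · have h' : v ∈ t := by
          rcases List.mem_cons.mp h with h | h
          · exact absurd h.symm hav
          · exact h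
        rw [idx_cons_ne _ hav, List.length_cons]
        exact Nat.succ_lt_succ (ih h')

lemma idx_map (b : Bool) (l : List Bool) (s : List (List Bool)) (h : l ∈ s) :
    (s.map (List.cons b)).idxOf (b :: l) = s.idxOf l := by
  induction s with
  | nil => simp at h
  | cons a t ih =>
      by_cases hal : a = l
      · subst hal
        simp [idx_cons_self]
      · have h' : l ∈ t := by
          rcases List.mem_cons.mp h with h | h
          · exact absurd h.symm hal
          · exact h
        rw [List.map_cons, idx_cons_ne _ (by simp [hal]), idx_cons_ne _ hal, ih h']

lemma capProb_root (G : RTree) (rest : List (List Bool)) :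
    capProb G (([] : List Bool) :: rest) [] = pAt G [] := by
  simp [capProb, idx_cons_self]

lemma capProb_first (G G₁ : RTree) (b : Bool) (hb : ∀ l, pAt G (b :: l) = pAt G₁ l)
    (s rest : List (List Bool)) (l : List Bool) (h : l ∈ s) :
    capProb G (([] : List Bool) :: (s.map (List.cons b) ++ rest)) (b :: l)
      = pAt G [] * capProb G₁ s l := by
  unfold capProb
  have hne : ([] : List Bool) ≠ b :: l := by simp
  rw [idx_cons_ne _ hne, idx_append_left _ (List.mem_map_of_mem h), idx_map b l s h]
  have hlen : s.idxOf l + 1 ≤ (s.map (List.cons b)).length := by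
    rw [List.length_map]
    exact idx_lt_length h
  rw [List.take_succ_cons, List.take_append_of_le_length hlen,
    ← List.map_take, List.map_cons, List.map_map, List.prod_cons]
  congr 1
  exact congrArg List.prod (List.map_congr_left (fun a _ => hb a))

lemma capProb_second (G G₁ H : RTree) (b b' : Bool) (hbb : b' ≠ b)
    (hb : ∀ l, pAt G (b :: l) = pAt G₁ l) (hb' : ∀ l, pAt G (b' :: l) = pAt H l)
    (s t : List (List Bool)) (ht : t.Perm (verts H)) (l : List Bool) (h : l ∈ s) :
    capProb G (([] : List Bool) :: (t.map (List.cons b') ++ s.map (List.cons b))) (b :: l)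
      = pAt G [] * (piT H * capProb G₁ s l) := by
  unfold capProb
  have hne : ([] : List Bool) ≠ b :: l := by simp
  have hnotmem : (b :: l) ∉ t.map (List.cons b') := by
    simp only [List.mem_map, not_exists]
    rintro a ⟨_, ha⟩
    exact hbb (List.head_eq_of_cons_eq ha)
  rw [idx_cons_ne _ hne, idx_append_right _ hnotmem, idx_map b l s h]
  have hlen : (t.map (List.cons b')).length + s.idxOf l + 1
      = (t.map (List.cons b')).length + (s.idxOf l + 1) := by ring
  rw [List.take_succ_cons, hlen, List.take_length_add_append, ← List.map_take, List.map_cons, List.map_append, List.map_map,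
    List.map_map, List.prod_cons, List.prod_append]
  have h1 : (t.map (pAt G ∘ List.cons b')).prod = piT H := by
    have : t.map (pAt G ∘ List.cons b') = t.map (pAt H) :=
      List.map_congr_left (fun a _ => hb' a)
    rw [this, (ht.map (pAt H)).prod_eq, prod_pAt_verts]
  have h2 : ((s.take (s.idxOf l + 1)).map (pAt G ∘ List.cons b)).prod
      = ((s.take (s.idxOf l + 1)).map (pAt G₁)).prod :=
    congrArg List.prod (List.map_congr_left (fun a _ => hb a))
  rw [h1, h2]

lemma sGPay_root (G : RTree) (h : valid G) : sGPay G [] = pAt G [] := by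
  unfold sGPay
  have : ∀ sq ∈ sG G, sq.2 * capProb G sq.1 ([] : List Bool) = Prod.snd sq * pAt G [] := by
    intro sq hsq
    obtain ⟨rest, hrest⟩ := sG_head G sq hsq
    rw [hrest, capProb_root]
  rw [List.map_congr_left this, List.sum_map_mul_right, sG_weight G h, one_mul]

lemma sGPay_node1 (p : ℝ) (G' : RTree) (l : List Bool) (hl : l ∈ verts G') :
    sGPay (node1 p G') (false :: l) = p * sGPay G' l := by
  unfold sGPay
  simp only [sG, List.map_map]
  have : ∀ sq ∈ sG G',
      ((fun sq => sq.2 * capProb (node1 p G') sq.1 (false :: l)) ∘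
        fun sq => (([] : List Bool) :: sq.1.map (List.cons false), sq.2)) sq
      = p * (sq.2 * capProb G' sq.1 l) := by
    intro sq hsq
    have hmem : l ∈ sq.1 := (sG_perm G' sq hsq).mem_iff.mpr hl
    have hcap := capProb_first (node1 p G') G' false (fun _ => rfl) sq.1 [] l hmem
    simp only [List.append_nil] at hcap
    simp only [Function.comp]
    rw [hcap]
    simp only [pAt]
    ring
  rw [List.map_congr_left this, List.sum_map_mul_left]

lemma sGPay_node2_left (p : ℝ) (G₁ G₂ : RTree) (h : valid (node2 p G₁ G₂))
    (l : List Bool) (hl : l ∈ verts G₁) :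
    sGPay (node2 p G₁ G₂) (false :: l)
      = p * (lamT G₁ G₂ * (1 / valT G₁ - piT G₂ / valT G₂)
          + lamT G₁ G₂ * (1 / valT G₂ - piT G₁ / valT G₁) * piT G₂) * sGPay G₁ l := by
  unfold sGPay
  have hsG : sG (node2 p G₁ G₂) = (sG G₁).flatMap (fun s₁ => (sG G₂).flatMap (fun s₂ =>
      [(([] : List Bool) :: (s₁.1.map (List.cons false) ++ s₂.1.map (List.cons true)),
          lamT G₁ G₂ * (1 / valT G₁ - piT G₂ / valT G₂) * s₁.2 * s₂.2),
       (([] : List Bool) :: (s₂.1.map (List.cons true) ++ s₁.1.map (List.cons false)),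
          lamT G₁ G₂ * (1 / valT G₂ - piT G₁ / valT G₁) * s₁.2 * s₂.2)])) := rfl
  set q₁ := lamT G₁ G₂ * (1 / valT G₁ - piT G₂ / valT G₂) with hq₁
  set q₂ := lamT G₁ G₂ * (1 / valT G₂ - piT G₁ / valT G₁) with hq₂
  rw [hsG, sum_map_flatMap]
  have outer : ∀ s₁ ∈ sG G₁,
      ((((sG G₂).flatMap (fun s₂ =>
      [(([] : List Bool) :: (s₁.1.map (List.cons false) ++ s₂.1.map (List.cons true)),
          q₁ * s₁.2 * s₂.2),
       (([] : List Bool) :: (s₂.1.map (List.cons true) ++ s₁.1.map (List.cons false)),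
          q₂ * s₁.2 * s₂.2)])).map
        (fun sq => sq.2 * capProb (node2 p G₁ G₂) sq.1 (false :: l))).sum)
      = (p * (q₁ + q₂ * piT G₂)) * (s₁.2 * capProb G₁ s₁.1 l) := by
    intro s₁ hs₁
    have hmem : l ∈ s₁.1 := (sG_perm G₁ s₁ hs₁).mem_iff.mpr hl
    rw [sum_map_flatMap]
    have inner : ∀ s₂ ∈ sG G₂,
        (([((([] : List Bool) :: (s₁.1.map (List.cons false) ++ s₂.1.map (List.cons true))),
            q₁ * s₁.2 * s₂.2),
          ((([] : List Bool) :: (s₂.1.map (List.cons true) ++ s₁.1.map (List.cons false))),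
            q₂ * s₁.2 * s₂.2)].map
          (fun sq => sq.2 * capProb (node2 p G₁ G₂) sq.1 (false :: l))).sum)
        = Prod.snd s₂ * ((p * (q₁ + q₂ * piT G₂)) * (s₁.2 * capProb G₁ s₁.1 l)) := by
      intro s₂ hs₂
      have hcap₁ := capProb_first (node2 p G₁ G₂) G₁ false (fun _ => rfl)
        s₁.1 (s₂.1.map (List.cons true)) l hmem
      have hcap₂ := capProb_second (node2 p G₁ G₂) G₁ G₂ false true (by simp)
        (fun _ => rfl) (fun _ => rfl) s₁.1 s₂.1 (sG_perm G₂ s₂ hs₂) l hmem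
      simp only [List.map_cons, List.map_nil, List.sum_cons, List.sum_nil, add_zero]
      rw [hcap₁, hcap₂]
      simp only [pAt]
      ring
    rw [List.map_congr_left inner, List.sum_map_mul_right, sG_weight G₂ h.2.2, one_mul]
  rw [List.map_congr_left outer, List.sum_map_mul_left]

lemma sGPay_node2_right (p : ℝ) (G₁ G₂ : RTree) (h : valid (node2 p G₁ G₂))
    (l : List Bool) (hl : l ∈ verts G₂) :
    sGPay (node2 p G₁ G₂) (true :: l)
      = p * (lamT G₁ G₂ * (1 / valT G₂ - piT G₁ / valT G₁)
          + lamT G₁ G₂ * (1 / valT G₁ - piT G₂ / valT G₂) * piT G₁) * sGPay G₂ l := by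
  unfold sGPay
  have hsG : sG (node2 p G₁ G₂) = (sG G₁).flatMap (fun s₁ => (sG G₂).flatMap (fun s₂ =>
      [(([] : List Bool) :: (s₁.1.map (List.cons false) ++ s₂.1.map (List.cons true)),
          lamT G₁ G₂ * (1 / valT G₁ - piT G₂ / valT G₂) * s₁.2 * s₂.2),
       (([] : List Bool) :: (s₂.1.map (List.cons true) ++ s₁.1.map (List.cons false)),
          lamT G₁ G₂ * (1 / valT G₂ - piT G₁ / valT G₁) * s₁.2 * s₂.2)])) := rfl
  set q₁ := lamT G₁ G₂ * (1 / valT G₁ - piT G₂ / valT G₂) with hq₁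
  set q₂ := lamT G₁ G₂ * (1 / valT G₂ - piT G₁ / valT G₁) with hq₂
  rw [hsG, sum_map_flatMap]
  have outer : ∀ s₁ ∈ sG G₁,
      ((((sG G₂).flatMap (fun s₂ =>
      [(([] : List Bool) :: (s₁.1.map (List.cons false) ++ s₂.1.map (List.cons true)),
          q₁ * s₁.2 * s₂.2),
       (([] : List Bool) :: (s₂.1.map (List.cons true) ++ s₁.1.map (List.cons false)),
          q₂ * s₁.2 * s₂.2)])).map
        (fun sq => sq.2 * capProb (node2 p G₁ G₂) sq.1 (true :: l))).sum)
      = Prod.snd s₁ * ((p * (q₂ + q₁ * piT G₁)) * sGPay G₂ l) := by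
    intro s₁ hs₁
    rw [sum_map_flatMap]
    have inner : ∀ s₂ ∈ sG G₂,
        (([((([] : List Bool) :: (s₁.1.map (List.cons false) ++ s₂.1.map (List.cons true))),
            q₁ * s₁.2 * s₂.2),
          ((([] : List Bool) :: (s₂.1.map (List.cons true) ++ s₁.1.map (List.cons false))),
            q₂ * s₁.2 * s₂.2)].map
          (fun sq => sq.2 * capProb (node2 p G₁ G₂) sq.1 (true :: l))).sum)
        = Prod.snd s₁ * ((p * (q₂ + q₁ * piT G₁)) * (s₂.2 * capProb G₂ s₂.1 l)) := by
      intro s₂ hs₂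
      have hmem : l ∈ s₂.1 := (sG_perm G₂ s₂ hs₂).mem_iff.mpr hl
      have hcap₁ := capProb_first (node2 p G₁ G₂) G₂ true (fun _ => rfl)
        s₂.1 (s₁.1.map (List.cons false)) l hmem
      have hcap₂ := capProb_second (node2 p G₁ G₂) G₂ G₁ true false (by simp)
        (fun _ => rfl) (fun _ => rfl) s₂.1 s₁.1 (sG_perm G₁ s₁ hs₁) l hmem
      simp only [List.map_cons, List.map_nil, List.sum_cons, List.sum_nil, add_zero]
      rw [hcap₁, hcap₂]
      simp only [pAt]
      ring
    rw [List.map_congr_left inner]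
    have : ∀ s₂ ∈ sG G₂,
        Prod.snd s₁ * ((p * (q₂ + q₁ * piT G₁)) * (s₂.2 * capProb G₂ s₂.1 l))
        = (Prod.snd s₁ * (p * (q₂ + q₁ * piT G₁))) * (s₂.2 * capProb G₂ s₂.1 l) := by
      intro s₂ _; ring
    rw [List.map_congr_left this, List.sum_map_mul_left]
    unfold sGPay
    ring
  rw [List.map_congr_left outer, List.sum_map_mul_right, sG_weight G₁ h.2.1, one_mul]
  simp only [sGPay]

end RTree

open RTree in
/-- the tree searching strategy `s_G` guarantees an expected payoff of at
least `V_G` against every Hider pure strategy (hiding vertex) `v`. -/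
theorem searching_strategy_guarantee (G : RTree) (hG : G.valid) :
    ∀ v ∈ verts G, G.valT ≤ sGPay G v := by
  induction G with
  | leaf p =>
      intro v hv
      simp only [verts, List.mem_singleton] at hv
      subst hv
      simp [sGPay, sG, capProb, valT, pAt, List.idxOf_cons_self]
  | node1 p G' ih =>
      intro v hv
      have hp := hG.1
      have hG' := hG.2
      simp only [verts, List.mem_cons, List.mem_map] at hv
      rcases hv with rfl | ⟨l, hl, rfl⟩
      · rw [sGPay_root _ hG]
        simp only [valT, pAt]
        nlinarith [valT_le_one G' hG', valT_pos G' hG', hp.1, hp.2]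
      · rw [sGPay_node1 p G' l hl]
        simp only [valT]
        have := ih hG' l hl
        nlinarith [hp.1]
  | node2 p G₁ G₂ ih₁ ih₂ =>
      intro v hv
      have hp := hG.1
      have h₁ := hG.2.1
      have h₂ := hG.2.2
      have v₁ := valT_pos G₁ h₁
      have v₂ := valT_pos G₂ h₂
      have π₁ := piT_pos G₁ h₁
      have π₂ := piT_pos G₂ h₂
      have π₁' := piT_lt_one G₁ h₁
      have π₂' := piT_lt_one G₂ h₂
      have hππ : piT G₁ * piT G₂ < 1 := by nlinarith
      have hlam := lamT_pos h₁ h₂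
      have hval : valT (node2 p G₁ G₂) = p * (lamT G₁ G₂ * (1 - piT G₁ * piT G₂)) := by
        simp only [valT, lamT]; ring
      simp only [verts, List.mem_cons, List.mem_append, List.mem_map] at hv
      rcases hv with rfl | ⟨l, hl, rfl⟩ | ⟨l, hl, rfl⟩
      · rw [sGPay_root _ hG]
        simp only [pAt]
        rw [hval]
        have := lam_core h₁ h₂ (valT_le_one G₁ h₁) (valT_le_one G₂ h₂)
        nlinarith [hp.1, hp.2]
      · rw [sGPay_node2_left p G₁ G₂ hG l hl]
        have hfac : lamT G₁ G₂ * (1 / valT G₁ - piT G₂ / valT G₂)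
            + lamT G₁ G₂ * (1 / valT G₂ - piT G₁ / valT G₁) * piT G₂
            = lamT G₁ G₂ * (1 - piT G₁ * piT G₂) / valT G₁ := by
          field_simp
          ring
        rw [hfac, hval]
        have hih := ih₁ h₁ l hl
        have e : p * (lamT G₁ G₂ * (1 - piT G₁ * piT G₂) / valT G₁) * sGPay G₁ l
            = (p * (lamT G₁ G₂ * (1 - piT G₁ * piT G₂))) * (sGPay G₁ l / valT G₁) := by
          field_simp
        rw [e]
        have hpos : (0:ℝ) ≤ p * (lamT G₁ G₂ * (1 - piT G₁ * piT G₂)) :=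
          mul_nonneg hp.1.le (mul_nonneg hlam.le (by linarith))
        exact le_mul_of_one_le_right hpos ((one_le_div v₁).mpr hih)
      · rw [sGPay_node2_right p G₁ G₂ hG l hl]
        have hfac : lamT G₁ G₂ * (1 / valT G₂ - piT G₁ / valT G₁)
            + lamT G₁ G₂ * (1 / valT G₁ - piT G₂ / valT G₂) * piT G₁
            = lamT G₁ G₂ * (1 - piT G₁ * piT G₂) / valT G₂ := by
          field_simp
          ring
        rw [hfac, hval]
        have hih := ih₂ h₂ l hl
        have e : p * (lamT G₁ G₂ * (1 - piT G₁ * piT G₂) / valT G₂) * sGPay G₂ l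
            = (p * (lamT G₁ G₂ * (1 - piT G₁ * piT G₂))) * (sGPay G₂ l / valT G₂) := by
          field_simp
        rw [e]
        have hpos : (0:ℝ) ≤ p * (lamT G₁ G₂ * (1 - piT G₁ * piT G₂)) :=
          mul_nonneg hp.1.le (mul_nonneg hlam.le (by linarith))
        exact le_mul_of_one_le_right hpos ((one_le_div v₂).mpr hih)
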